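/- Let E be a subset of {1,...,m} and w a word that pseudo-mixes E (with respect to a family of nonnegative m×m matrices). Then there is a constant τ in (0,1) such that for all nonnegative vectors u, v with support exactly E, d_H(u M_w, v M_w) ≤ τ · d_H(u, v). -/

import Mathlib

lemma aux_log_ratio (θ t : ℝ) (hθ0 : 0 ≤ θ) (hθ1 : θ ≤ 1) (ht : 0 ≤ t) :
    Real.log (1 + θ*t) ≤ (1 - (1-θ)/(1+t)) * Real.log (1+t) := by
  have h1t : (0:ℝ) < 1 + t := by linarith
  have hθt : (0:ℝ) < 1 + θ*t := by nlinarith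
  have key1 : (1-θ)*t/(1+t) ≤ Real.log (1+t) - Real.log (1+θ*t) := by
    have hd : Real.log (1+t) - Real.log (1+θ*t) = Real.log ((1+t)/(1+θ*t)) :=
      (Real.log_div (ne_of_gt h1t) (ne_of_gt hθt)).symm
    rw [hd]
    have h := Real.log_le_sub_one_of_pos (show (0:ℝ) < (1+θ*t)/(1+t) from div_pos hθt h1t)
    rw [Real.log_div (ne_of_gt hθt) (ne_of_gt h1t)] at h
    have expand : (1+θ*t)/(1+t) - 1 = -((1-θ)*t/(1+t)) := by field_simp; ring
    rw [Real.log_div (ne_of_gt h1t) (ne_of_gt hθt)]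
    linarith [expand ▸ h]
  have key2 : Real.log (1+t) ≤ t := by linarith [Real.log_le_sub_one_of_pos h1t]
  have hfrac : 0 ≤ (1-θ)/(1+t) := div_nonneg (by linarith) (le_of_lt h1t)
  have h3 : (1-θ)/(1+t) * Real.log (1+t) ≤ (1-θ)/(1+t) * t :=
    mul_le_mul_of_nonneg_left key2 hfrac
  have e : (1-θ)/(1+t) * t = (1-θ)*t/(1+t) := by ring
  have expand2 : (1 - (1-θ)/(1+t)) * Real.log (1+t)
      = Real.log (1+t) - (1-θ)/(1+t) * Real.log (1+t) := by ring
  rw [expand2]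
  linarith

lemma aux_contract (c x x' : ℝ) (hc0 : 0 < c) (hc1 : c ≤ 1) (hx : 1 ≤ x) (hx' : 0 < x')
    (h1 : x' ≤ 1 + (1 - c^2) * (x - 1)) (h2 : x' ≤ (c^2)⁻¹) :
    Real.log x' ≤ max (1/2) (1 - c^6) * Real.log x := by
  have hx0 : (0:ℝ) < x := lt_of_lt_of_le one_pos hx
  have hlx : 0 ≤ Real.log x := Real.log_nonneg hx
  have hc2 : (0:ℝ) < c^2 := by positivity
  have hc2le1 : c^2 ≤ 1 := by nlinarith
  have hc4 : (0:ℝ) < c^4 := by positivity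
  have hmax : (1:ℝ)/2 ≤ max (1/2) (1 - c^6) := le_max_left _ _
  rcases le_or_gt x (c^4)⁻¹ with hcase | hcase
  · have hθ : Real.log x' ≤ Real.log (1 + (1-c^2)*(x-1)) := Real.log_le_log hx' h1
    have hlr := aux_log_ratio (1-c^2) (x-1) (by nlinarith) (by nlinarith) (by linarith)
    have e : 1 + (x-1) = x := by ring
    rw [e] at hlr
    have e2 : (1 - (1-(1-c^2))/x) = 1 - c^2/x := by ring_nf
    rw [e2] at hlr
    have hfac : 1 - c^2/x ≤ 1 - c^6 := by
      have hxc : c^4 * x ≤ 1 := by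
        nlinarith [mul_le_mul_of_nonneg_left hcase (le_of_lt hc4), mul_inv_cancel₀ (ne_of_gt hc4)]
      have : c^6 ≤ c^2/x := by
        rw [le_div_iff₀ hx0]; nlinarith
      linarith
    have : Real.log (1 + (1-c^2)*(x-1)) ≤ (1 - c^6) * Real.log x := by
      calc Real.log (1 + (1-c^2)*(x-1)) ≤ (1 - c^2/x) * Real.log x := hlr
        _ ≤ (1 - c^6) * Real.log x := mul_le_mul_of_nonneg_right hfac hlx
    calc Real.log x' ≤ (1 - c^6) * Real.log x := le_trans hθ this
      _ ≤ max (1/2) (1 - c^6) * Real.log x :=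
        mul_le_mul_of_nonneg_right (le_max_right _ _) hlx
  · have hl2 : Real.log x' ≤ Real.log ((c^2)⁻¹) := Real.log_le_log hx' h2
    have e2 : Real.log ((c^2)⁻¹) = -(2*Real.log c) := by
      rw [Real.log_inv, Real.log_pow]; push_cast; ring
    have hlxgt : Real.log ((c^4)⁻¹) ≤ Real.log x := Real.log_le_log (by positivity) (le_of_lt hcase)
    have e4 : Real.log ((c^4)⁻¹) = -(4*Real.log c) := by
      rw [Real.log_inv, Real.log_pow]; push_cast; ring
    have hlogc : Real.log c ≤ 0 := Real.log_nonpos (le_of_lt hc0) hc1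
    have h12 : Real.log x' ≤ (1/2) * Real.log x := by
      rw [e2] at hl2; rw [e4] at hlxgt; linarith
    calc Real.log x' ≤ (1/2) * Real.log x := h12
      _ ≤ max (1/2) (1 - c^6) * Real.log x := mul_le_mul_of_nonneg_right hmax hlx

lemma Mprod_nonneg {A : Type*} {m : ℕ} (M : A → Matrix (Fin m) (Fin m) ℝ)
    (hM : ∀ a i j, 0 ≤ M a i j) :
    ∀ (w : List A) (i j : Fin m), 0 ≤ ((w.map M).prod) i j := by
  intro w
  induction w with
  | nil =>
      intro i j
      simp only [List.map_nil, List.prod_nil]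
      rw [Matrix.one_apply]
      split <;> norm_num
  | cons a w ih =>
      intro i j
      simp only [List.map_cons, List.prod_cons]
      rw [Matrix.mul_apply]
      exact Finset.sum_nonneg fun k _ => mul_nonneg (hM a i k) (ih k j)



/-- l1 norm of a vector in ℝ^m. -/
noncomputable def l1 {m : ℕ} (v : Fin m → ℝ) : ℝ := ∑ i, |v i|

/-- Support of a vector: the set of indices where it is positive. -/
noncomputable def supp {m : ℕ} (v : Fin m → ℝ) : Finset (Fin m) :=
  Finset.univ.filter fun i => 0 < v i

/-- Hilbert projective distance between two vectors with common nonempty support `E`. -/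
noncomputable def dH {m : ℕ} (E : Finset (Fin m)) (hE : E.Nonempty) (u v : Fin m → ℝ) : ℝ :=
  Real.log (E.sup' hE fun i => u i / v i) + Real.log (E.sup' hE fun i => v i / u i)


/-- Product of matrices along a word. -/
noncomputable def Mprod {A : Type*} {m : ℕ} (M : A → Matrix (Fin m) (Fin m) ℝ)
    (w : List A) : Matrix (Fin m) (Fin m) ℝ := (w.map M).prod

/-- Action of a word on a subset of indices: `E · w = supp(v_E M_w)`. -/
noncomputable def Eact {A : Type*} {m : ℕ} (M : A → Matrix (Fin m) (Fin m) ℝ)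
    (E : Finset (Fin m)) (w : List A) : Finset (Fin m) :=
  supp (Matrix.vecMul (fun i => if i ∈ E then (1 : ℝ) else 0) (Mprod M w))

/-- `w` pseudo-mixes `E`: `E·w = E` and each singleton of `E` is sent to `E` or `∅`. -/
def PseudoMixes {A : Type*} {m : ℕ} (M : A → Matrix (Fin m) (Fin m) ℝ)
    (E : Finset (Fin m)) (w : List A) : Prop :=
  Eact M E w = E ∧ ∀ i ∈ E, Eact M {i} w = E ∨ Eact M {i} w = ∅

set_option maxHeartbeats 1000000 in
/-- Birkhoff-type contraction for pseudo-mixing words. -/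
theorem stmt7 {A : Type*} {m : ℕ}
    (M : A → Matrix (Fin m) (Fin m) ℝ) (hM : ∀ a i j, 0 ≤ M a i j)
    (E : Finset (Fin m)) (hE : E.Nonempty) (w : List A) (hw : PseudoMixes M E w) :
    ∃ τ : ℝ, 0 < τ ∧ τ < 1 ∧
      ∀ u v : Fin m → ℝ, 0 ≤ u → 0 ≤ v → supp u = E → supp v = E →
        dH E hE (Matrix.vecMul u (Mprod M w)) (Matrix.vecMul v (Mprod M w)) ≤
          τ * dH E hE u v := by
  classical
  have hN0 : ∀ i j, 0 ≤ Mprod M w i j := Mprod_nonneg M hM w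
  have hvm : ∀ (z : Fin m → ℝ) (j : Fin m),
      Matrix.vecMul z (Mprod M w) j = ∑ i, z i * Mprod M w i j := by
    intro z j; simp [Matrix.vecMul, dotProduct]
  have hcolE : ∀ j, j ∈ E ↔ 0 < ∑ i ∈ E, Mprod M w i j := by
    intro j
    have h := hw.1
    rw [Finset.ext_iff] at h
    have h2 := h j
    simp only [Eact, supp, Finset.mem_filter, Finset.mem_univ, true_and] at h2
    have e : Matrix.vecMul (fun i => if i ∈ E then (1:ℝ) else 0) (Mprod M w) j
        = ∑ i ∈ E, Mprod M w i j := by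
      rw [hvm]
      simp [ite_mul, Finset.sum_ite_mem]
    rw [e] at h2
    exact h2.symm
  have hrowE : ∀ i ∈ E, (∀ j, (0 < Mprod M w i j ↔ j ∈ E)) ∨ (∀ j, Mprod M w i j = 0) := by
    intro i hi
    have e : ∀ j, Matrix.vecMul (fun k => if k ∈ ({i} : Finset (Fin m)) then (1:ℝ) else 0)
        (Mprod M w) j = Mprod M w i j := by
      intro j
      rw [hvm]
      simp [Finset.mem_singleton, ite_mul]
    rcases hw.2 i hi with h | h
    · left
      intro j
      rw [Finset.ext_iff] at h
      have h2 := h j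
      simp only [Eact, supp, Finset.mem_filter, Finset.mem_univ, true_and] at h2
      rw [e j] at h2
      exact h2
    · right
      intro j
      rw [Finset.ext_iff] at h
      have h2 := h j
      simp only [Eact, supp, Finset.mem_filter, Finset.mem_univ, true_and,
        Finset.notMem_empty, iff_false, not_lt] at h2
      rw [e j] at h2
      exact le_antisymm h2 (hN0 i j)
  set N := Mprod M w with hNdef
  clear_value N
  obtain ⟨j₀, hj₀⟩ := hE.exists_mem
  set P := E.filter (fun i => 0 < N i j₀) with hPdef
  clear_value P
  have hPsub : P ⊆ E := by rw [hPdef]; exact Finset.filter_subset _ _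
  have hProw : ∀ i ∈ P, ∀ j ∈ E, 0 < N i j := by
    intro i hiP j hj
    rw [hPdef] at hiP
    obtain ⟨hiE, hipos⟩ := Finset.mem_filter.mp hiP
    rcases hrowE i hiE with h | h
    · exact (h j).mpr hj
    · rw [h j₀] at hipos; exact absurd hipos (lt_irrefl 0)
  have hP0 : ∀ i ∈ E, i ∉ P → ∀ j, N i j = 0 := by
    intro i hiE hiP j
    rw [hPdef] at hiP
    rcases hrowE i hiE with h | h
    · exact absurd (Finset.mem_filter.mpr ⟨hiE, (h j₀).mpr hj₀⟩) hiP
    · exact h j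
  have hPne : P.Nonempty := by
    obtain ⟨i, hi, hipos⟩ : ∃ i ∈ E, 0 < N i j₀ := by
      by_contra hcon
      push_neg at hcon
      have hz : ∑ i ∈ E, N i j₀ = 0 :=
        Finset.sum_eq_zero fun i hi => le_antisymm (hcon i hi) (hN0 i j₀)
      have hlt := (hcolE j₀).mp hj₀
      rw [hz] at hlt
      exact absurd hlt (lt_irrefl 0)
    exact ⟨i, by rw [hPdef]; exact Finset.mem_filter.mpr ⟨hi, hipos⟩⟩
  have hPEne : (P ×ˢ E).Nonempty := hPne.product hE
  set β := (P ×ˢ E).inf' hPEne (fun p => N p.1 p.2) with hβdef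
  set B := (P ×ˢ E).sup' hPEne (fun p => N p.1 p.2) with hBdef
  clear_value β B
  have hβpos : 0 < β := by
    rw [hβdef, Finset.lt_inf'_iff]
    intro p hp
    obtain ⟨h1, h2⟩ := Finset.mem_product.mp hp
    exact hProw p.1 h1 p.2 h2
  have hβB : β ≤ B := by
    obtain ⟨p, hp⟩ := hPEne
    rw [hβdef, hBdef]
    exact le_trans (Finset.inf'_le (fun p : Fin m × Fin m => N p.1 p.2) hp)
      (Finset.le_sup' (fun p : Fin m × Fin m => N p.1 p.2) hp)
  have hBpos : 0 < B := lt_of_lt_of_le hβpos hβB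
  set c := β / B with hcdef
  clear_value c
  have hc0 : 0 < c := by rw [hcdef]; exact div_pos hβpos hBpos
  have hc1 : c ≤ 1 := by rw [hcdef]; exact (div_le_one hBpos).mpr hβB
  have hc2 : (0:ℝ) < c^2 := by positivity
  have hc2le1 : c^2 ≤ 1 := by nlinarith
  have hkey : ∀ i ∈ E, ∀ j ∈ E, ∀ j' ∈ E, c * N i j' ≤ N i j := by
    intro i hi j hj j' hj'
    by_cases hiP : i ∈ P
    · have h1 : β ≤ N i j := by
        rw [hβdef]
        exact Finset.inf'_le (fun p : Fin m × Fin m => N p.1 p.2)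
          (Finset.mk_mem_product hiP hj)
      have h2 : N i j' ≤ B := by
        rw [hBdef]
        exact Finset.le_sup' (fun p : Fin m × Fin m => N p.1 p.2)
          (Finset.mk_mem_product hiP hj')
      calc c * N i j' ≤ c * B := mul_le_mul_of_nonneg_left h2 (le_of_lt hc0)
        _ = β := by rw [hcdef]; exact div_mul_cancel₀ _ (ne_of_gt hBpos)
        _ ≤ N i j := h1
    · rw [hP0 i hi hiP j, hP0 i hi hiP j']
      simp
  refine ⟨max (1/2) (1 - c^6), lt_of_lt_of_le (by norm_num) (le_max_left _ _),
    max_lt (by norm_num) (by nlinarith [pow_pos hc0 6]), ?_⟩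
  intro u v hu hv hsu hsv
  have hu' : ∀ i, 0 ≤ u i := fun i => hu i
  have hv' : ∀ i, 0 ≤ v i := fun i => hv i
  have hupos : ∀ i ∈ E, 0 < u i := by
    intro i hi
    rw [← hsu] at hi
    exact (Finset.mem_filter.mp hi).2
  have hvpos : ∀ i ∈ E, 0 < v i := by
    intro i hi
    rw [← hsv] at hi
    exact (Finset.mem_filter.mp hi).2
  have hu0 : ∀ i, i ∉ E → u i = 0 := by
    intro i hi
    rw [← hsu] at hi
    simp only [supp, Finset.mem_filter, Finset.mem_univ, true_and, not_lt] at hi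
    exact le_antisymm hi (hu' i)
  have hv0 : ∀ i, i ∉ E → v i = 0 := by
    intro i hi
    rw [← hsv] at hi
    simp only [supp, Finset.mem_filter, Finset.mem_univ, true_and, not_lt] at hi
    exact le_antisymm hi (hv' i)
  set F := fun j => ∑ i ∈ E, u i * N i j with hFdef
  set G := fun j => ∑ i ∈ E, v i * N i j with hGdef
  clear_value F G
  have hFeq : ∀ j, F j = ∑ i ∈ E, u i * N i j := fun j => by rw [hFdef]
  have hGeq : ∀ j, G j = ∑ i ∈ E, v i * N i j := fun j => by rw [hGdef]
  have hFvm : ∀ j, Matrix.vecMul u N j = F j := by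
    intro j
    rw [hvm, hFeq]
    exact (Finset.sum_subset (Finset.subset_univ E)
      (fun i _ hi => by rw [hu0 i hi, zero_mul])).symm
  have hGvm : ∀ j, Matrix.vecMul v N j = G j := by
    intro j
    rw [hvm, hGeq]
    exact (Finset.sum_subset (Finset.subset_univ E)
      (fun i _ hi => by rw [hv0 i hi, zero_mul])).symm
  obtain ⟨i₀, hi₀P⟩ := hPne.exists_mem
  have hi₀E : i₀ ∈ E := hPsub hi₀P
  have hFpos : ∀ j ∈ E, 0 < F j := by
    intro j hj
    rw [hFeq]
    exact Finset.sum_pos' (fun i _ => mul_nonneg (hu' i) (hN0 i j))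
      ⟨i₀, hi₀E, mul_pos (hupos i₀ hi₀E) (hProw i₀ hi₀P j hj)⟩
  have hGpos : ∀ j ∈ E, 0 < G j := by
    intro j hj
    rw [hGeq]
    exact Finset.sum_pos' (fun i _ => mul_nonneg (hv' i) (hN0 i j))
      ⟨i₀, hi₀E, mul_pos (hvpos i₀ hi₀E) (hProw i₀ hi₀P j hj)⟩
  set S1 := E.sup' hE (fun i => u i / v i) with hS1def
  set S2 := E.sup' hE (fun i => v i / u i) with hS2def
  clear_value S1 S2
  have hrle : ∀ i ∈ E, u i / v i ≤ S1 := by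
    intro i hi; rw [hS1def]; exact Finset.le_sup' (fun i => u i / v i) hi
  have hvule : ∀ i ∈ E, v i / u i ≤ S2 := by
    intro i hi; rw [hS2def]; exact Finset.le_sup' (fun i => v i / u i) hi
  have hS1pos : 0 < S1 :=
    lt_of_lt_of_le (div_pos (hupos j₀ hj₀) (hvpos j₀ hj₀)) (hrle j₀ hj₀)
  have hS2pos : 0 < S2 :=
    lt_of_lt_of_le (div_pos (hvpos j₀ hj₀) (hupos j₀ hj₀)) (hvule j₀ hj₀)
  have hS1le : ∀ i ∈ E, u i ≤ S1 * v i := by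
    intro i hi
    have h := hrle i hi
    rwa [div_le_iff₀ (hvpos i hi)] at h
  have hS2le : ∀ i ∈ E, v i ≤ S2 * u i := by
    intro i hi
    have h := hvule i hi
    rwa [div_le_iff₀ (hupos i hi)] at h
  have hx1 : 1 ≤ S1 * S2 := by
    have h1 : u j₀ / v j₀ ≤ S1 := hrle j₀ hj₀
    have h2 : v j₀ / u j₀ ≤ S2 := hvule j₀ hj₀
    have he : (u j₀ / v j₀) * (v j₀ / u j₀) = 1 := by
      rw [div_mul_div_comm, div_eq_one_iff_eq (ne_of_gt (mul_pos (hvpos j₀ hj₀) (hupos j₀ hj₀)))]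
      ring
    calc (1:ℝ) = (u j₀ / v j₀) * (v j₀ / u j₀) := he.symm
      _ ≤ S1 * S2 := mul_le_mul h1 h2
          (le_of_lt (div_pos (hvpos j₀ hj₀) (hupos j₀ hj₀))) (le_of_lt hS1pos)
  have hrge : ∀ i ∈ E, S2⁻¹ ≤ u i / v i := by
    intro i hi
    rw [le_div_iff₀ (hvpos i hi)]
    have h := mul_le_mul_of_nonneg_left (hS2le i hi) (le_of_lt (inv_pos.mpr hS2pos))
    have e : S2⁻¹ * (S2 * u i) = u i := by field_simp
    linarith
  have hGleS2F : ∀ j ∈ E, G j ≤ S2 * F j := by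
    intro j hj
    rw [hGeq, hFeq, Finset.mul_sum]
    refine Finset.sum_le_sum fun i hi => ?_
    calc v i * N i j ≤ (S2 * u i) * N i j :=
        mul_le_mul_of_nonneg_right (hS2le i hi) (hN0 i j)
      _ = S2 * (u i * N i j) := by ring
  have hFc : ∀ j ∈ E, ∀ j' ∈ E, c * F j' ≤ F j := by
    intro j hj j' hj'
    rw [hFeq, hFeq, Finset.mul_sum]
    refine Finset.sum_le_sum fun i hi => ?_
    calc c * (u i * N i j') = u i * (c * N i j') := by ring
      _ ≤ u i * N i j := mul_le_mul_of_nonneg_left (hkey i hi j hj j' hj') (hu' i)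
  have hGc : ∀ j ∈ E, ∀ j' ∈ E, c * G j' ≤ G j := by
    intro j hj j' hj'
    rw [hGeq, hGeq, Finset.mul_sum]
    refine Finset.sum_le_sum fun i hi => ?_
    calc c * (v i * N i j') = v i * (c * N i j') := by ring
      _ ≤ v i * N i j := mul_le_mul_of_nonneg_left (hkey i hi j hj j' hj') (hv' i)
  obtain ⟨j₁, hj₁, hj₁e⟩ := Finset.exists_mem_eq_sup' hE (fun j => F j / G j)
  obtain ⟨j₂, hj₂, hj₂e⟩ := Finset.exists_mem_eq_sup' hE (fun j => G j / F j)
  have hGj₁ : 0 < G j₁ := hGpos j₁ hj₁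
  have hGj₂ : 0 < G j₂ := hGpos j₂ hj₂
  have hFj₁ : 0 < F j₁ := hFpos j₁ hj₁
  have hFj₂ : 0 < F j₂ := hFpos j₂ hj₂
  set R1 := F j₁ / G j₁ with hR1def
  set R2 := F j₂ / G j₂ with hR2def
  clear_value R1 R2
  have hR1pos : 0 < R1 := by rw [hR1def]; exact div_pos hFj₁ hGj₁
  have hR2pos : 0 < R2 := by rw [hR2def]; exact div_pos hFj₂ hGj₂
  have hR12 : R2 ≤ R1 := by
    rw [← hj₁e, hR2def]
    exact Finset.le_sup' (fun j => F j / G j) hj₂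
  have hR2geρ : S2⁻¹ ≤ R2 := by
    rw [hR2def, le_div_iff₀ hGj₂]
    have h := mul_le_mul_of_nonneg_left (hGleS2F j₂ hj₂) (le_of_lt (inv_pos.mpr hS2pos))
    have e : S2⁻¹ * (S2 * F j₂) = F j₂ := by field_simp
    linarith
  -- Dobrushin-type oscillation bound
  set a := fun i => v i * N i j₁ / G j₁ with hadef
  set b := fun i => v i * N i j₂ / G j₂ with hbdef
  set q := fun i => min (a i) (b i) with hqdef
  clear_value a b q
  have haeq : ∀ i, a i = v i * N i j₁ / G j₁ := fun i => by rw [hadef]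
  have hbeq : ∀ i, b i = v i * N i j₂ / G j₂ := fun i => by rw [hbdef]
  have hqeq : ∀ i, q i = min (a i) (b i) := fun i => by rw [hqdef]
  have hasum : ∑ i ∈ E, a i = 1 := by
    have : ∑ i ∈ E, a i = (∑ i ∈ E, v i * N i j₁) / G j₁ := by
      rw [Finset.sum_div]
      exact Finset.sum_congr rfl fun i _ => haeq i
    rw [this, ← hGeq]
    exact div_self (ne_of_gt hGj₁)
  have hbsum : ∑ i ∈ E, b i = 1 := by
    have : ∑ i ∈ E, b i = (∑ i ∈ E, v i * N i j₂) / G j₂ := by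
      rw [Finset.sum_div]
      exact Finset.sum_congr rfl fun i _ => hbeq i
    rw [this, ← hGeq]
    exact div_self (ne_of_gt hGj₂)
  have hra : ∑ i ∈ E, a i * (u i / v i) = R1 := by
    have hpt : ∀ i ∈ E, a i * (u i / v i) = u i * N i j₁ / G j₁ := by
      intro i hi
      rw [haeq]
      have hvne : v i ≠ 0 := ne_of_gt (hvpos i hi)
      field_simp
    rw [Finset.sum_congr rfl hpt, ← Finset.sum_div, ← hFeq, hR1def]
  have hrb : ∑ i ∈ E, b i * (u i / v i) = R2 := by
    have hpt : ∀ i ∈ E, b i * (u i / v i) = u i * N i j₂ / G j₂ := by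
      intro i hi
      rw [hbeq]
      have hvne : v i ≠ 0 := ne_of_gt (hvpos i hi)
      field_simp
    rw [Finset.sum_congr rfl hpt, ← Finset.sum_div, ← hFeq, hR2def]
  have hb0 : ∀ i ∈ E, 0 ≤ b i := by
    intro i hi
    rw [hbeq]
    exact div_nonneg (mul_nonneg (hv' i) (hN0 i j₂)) (le_of_lt hGj₂)
  have hc2b : ∀ i ∈ E, c^2 * b i ≤ q i := by
    intro i hi
    rw [hqeq]
    refine le_min ?_ ?_
    · rw [haeq, hbeq, ← mul_div_assoc, div_le_div_iff₀ hGj₂ hGj₁]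
      have h1 : c * N i j₂ ≤ N i j₁ := hkey i hi j₁ hj₁ j₂ hj₂
      have h2 : c * G j₁ ≤ G j₂ := hGc j₂ hj₂ j₁ hj₁
      have h3 : (c * N i j₂) * (c * G j₁) ≤ N i j₁ * G j₂ :=
        mul_le_mul h1 h2 (by positivity) (hN0 i j₁)
      nlinarith [mul_le_mul_of_nonneg_left h3 (hv' i)]
    · exact mul_le_of_le_one_left (hb0 i hi) hc2le1
  have hqa : ∀ i, q i ≤ a i := fun i => by rw [hqeq]; exact min_le_left _ _
  have hqb : ∀ i, q i ≤ b i := fun i => by rw [hqeq]; exact min_le_right _ _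
  set s := ∑ i ∈ E, q i with hsdef
  clear_value s
  have hs1 : s ≤ 1 := by
    rw [hsdef, ← hasum]
    exact Finset.sum_le_sum fun i _ => hqa i
  have hsc : c^2 ≤ s := by
    rw [hsdef]
    calc c^2 = ∑ i ∈ E, c^2 * b i := by rw [← Finset.mul_sum, hbsum, mul_one]
      _ ≤ ∑ i ∈ E, q i := Finset.sum_le_sum hc2b
  have hupper : ∑ i ∈ E, (a i - q i) * (u i / v i) ≤ (1 - s) * S1 := by
    calc ∑ i ∈ E, (a i - q i) * (u i / v i) ≤ ∑ i ∈ E, (a i - q i) * S1 :=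
        Finset.sum_le_sum fun i hi =>
          mul_le_mul_of_nonneg_left (hrle i hi) (sub_nonneg.mpr (hqa i))
      _ = (∑ i ∈ E, (a i - q i)) * S1 := by rw [Finset.sum_mul]
      _ = (1 - s) * S1 := by rw [Finset.sum_sub_distrib, hasum, ← hsdef]
  have hlower : (1 - s) * S2⁻¹ ≤ ∑ i ∈ E, (b i - q i) * (u i / v i) := by
    calc (1 - s) * S2⁻¹ = (∑ i ∈ E, (b i - q i)) * S2⁻¹ := by
          rw [Finset.sum_sub_distrib, hbsum, ← hsdef]
      _ = ∑ i ∈ E, (b i - q i) * S2⁻¹ := by rw [Finset.sum_mul]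
      _ ≤ ∑ i ∈ E, (b i - q i) * (u i / v i) :=
        Finset.sum_le_sum fun i hi =>
          mul_le_mul_of_nonneg_left (hrge i hi) (sub_nonneg.mpr (hqb i))
  have hdecomp : R1 - R2 = ∑ i ∈ E, (a i - q i) * (u i / v i)
      - ∑ i ∈ E, (b i - q i) * (u i / v i) := by
    calc R1 - R2 = ∑ i ∈ E, a i * (u i / v i) - ∑ i ∈ E, b i * (u i / v i) := by
          rw [hra, hrb]
      _ = ∑ i ∈ E, (a i * (u i / v i) - b i * (u i / v i)) :=
          (Finset.sum_sub_distrib _ _).symm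
      _ = ∑ i ∈ E, ((a i - q i) * (u i / v i) - (b i - q i) * (u i / v i)) :=
          Finset.sum_congr rfl fun i _ => by ring
      _ = ∑ i ∈ E, (a i - q i) * (u i / v i) - ∑ i ∈ E, (b i - q i) * (u i / v i) :=
          Finset.sum_sub_distrib _ _
  have hS1ρ : 0 ≤ S1 - S2⁻¹ := by
    have h : S2⁻¹ * S2 ≤ S1 * S2 := by
      rw [inv_mul_cancel₀ (ne_of_gt hS2pos)]
      exact hx1
    have := le_of_mul_le_mul_right h hS2pos
    linarith
  have stepB : R1 - R2 ≤ (1 - c^2) * (S1 - S2⁻¹) := by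
    have h1s : 1 - s ≤ 1 - c^2 := by linarith
    calc R1 - R2 ≤ (1 - s) * S1 - (1 - s) * S2⁻¹ := by
          rw [hdecomp]; linarith
      _ = (1 - s) * (S1 - S2⁻¹) := by ring
      _ ≤ (1 - c^2) * (S1 - S2⁻¹) := mul_le_mul_of_nonneg_right h1s hS1ρ
  have hxh1 : R1 / R2 ≤ 1 + (1 - c^2) * (S1 * S2 - 1) := by
    rw [div_le_iff₀ hR2pos]
    have hid : (S1 * S2 - 1) * S2⁻¹ = S1 - S2⁻¹ := by
      field_simp
    have hmono : S1 - S2⁻¹ ≤ (S1 * S2 - 1) * R2 := by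
      calc S1 - S2⁻¹ = (S1 * S2 - 1) * S2⁻¹ := hid.symm
        _ ≤ (S1 * S2 - 1) * R2 :=
          mul_le_mul_of_nonneg_left hR2geρ (by linarith)
    have h6 : (1 - c^2) * (S1 - S2⁻¹) ≤ (1 - c^2) * ((S1 * S2 - 1) * R2) :=
      mul_le_mul_of_nonneg_left hmono (by linarith)
    have e7 : (1 + (1 - c^2) * (S1 * S2 - 1)) * R2
        = R2 + (1 - c^2) * ((S1 * S2 - 1) * R2) := by ring
    rw [e7]
    linarith
  have hxh2 : R1 / R2 ≤ (c^2)⁻¹ := by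
    rw [div_le_iff₀ hR2pos, hR1def, hR2def, ← mul_div_assoc, div_le_div_iff₀ hGj₁ hGj₂]
    have h1 : c * F j₁ ≤ F j₂ := hFc j₂ hj₂ j₁ hj₁
    have h2 : c * G j₂ ≤ G j₁ := hGc j₁ hj₁ j₂ hj₂
    have h3 : (c * F j₁) * (c * G j₂) ≤ F j₂ * G j₁ :=
      mul_le_mul h1 h2 (by positivity) (le_of_lt hFj₂)
    have h4 := mul_le_mul_of_nonneg_left h3 (le_of_lt (inv_pos.mpr hc2))
    have e : (c^2)⁻¹ * ((c * F j₁) * (c * G j₂)) = F j₁ * G j₂ := by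
      field_simp
    rw [e] at h4
    rw [mul_assoc]
    exact h4
  have hxpos : 0 < R1 / R2 := div_pos hR1pos hR2pos
  have hcontract := aux_contract c (S1 * S2) (R1 / R2) hc0 hc1 hx1 hxpos hxh1 hxh2
  have hGF2 : G j₂ / F j₂ = R2⁻¹ := by rw [hR2def, inv_div]
  have hdH1 : dH E hE (Matrix.vecMul u N) (Matrix.vecMul v N)
      = Real.log R1 + Real.log (G j₂ / F j₂) := by
    have e1 : (E.sup' hE fun i => Matrix.vecMul u N i / Matrix.vecMul v N i)
        = E.sup' hE fun j => F j / G j :=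
      Finset.sup'_congr hE rfl fun j _ => by rw [hFvm j, hGvm j]
    have e2 : (E.sup' hE fun i => Matrix.vecMul v N i / Matrix.vecMul u N i)
        = E.sup' hE fun j => G j / F j :=
      Finset.sup'_congr hE rfl fun j _ => by rw [hFvm j, hGvm j]
    simp only [dH]
    rw [e1, e2, hj₁e, hj₂e, hR1def]
  have hdH2 : dH E hE u v = Real.log (S1 * S2) := by
    simp only [dH]
    rw [← hS1def, ← hS2def, Real.log_mul (ne_of_gt hS1pos) (ne_of_gt hS2pos)]
  rw [hdH1, hdH2]
  have hlog : Real.log R1 + Real.log (G j₂ / F j₂) = Real.log (R1 / R2) := by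
    rw [hGF2, Real.log_inv, Real.log_div (ne_of_gt hR1pos) (ne_of_gt hR2pos)]
    ring
  rw [hlog]
  exact hcontract
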